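/- For all real matrices A (m×m), B (m×k), C (t×m), D (t×k) conforming respectively to the patterns S_A, S_B, S_C, S_D, and such that A is invertible, the rank of the Schur complement D − C·A⁻¹·B is at most p, the maximal cardinality of a vertex-disjoint family of U–Y paths in the directed graph G_p. -/

import Mathlib

/-- A real matrix `X` conforms to a sparsity pattern `S` if every nonzero
entry of `X` lies at a position of `S`. -/
def ConformsTo {α β : Type*} (X : Matrix α β ℝ) (S : Set (α × β)) : Prop :=
  ∀ i j, X i j ≠ 0 → (i, j) ∈ S

/-- Vertices of the directed graph `G_p`: state vertices `x_1,…,x_m` (`Sum.inl`),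
input vertices `u_1,…,u_k` (`Sum.inr ∘ Sum.inl`), and output vertices
`y_1,…,y_t` (`Sum.inr ∘ Sum.inr`). -/
abbrev GpVert (m k t : ℕ) := Fin m ⊕ (Fin k ⊕ Fin t)

/-- The edge relation of the directed graph `G_p` associated with the sparsity
patterns `S_A, S_B, S_C, S_D`:
`x_{m₂} → x_{m₁}` iff `(m₁, m₂) ∈ S_A`; `u_j → x_i` iff `(i, j) ∈ S_B`;
`x_i → y_ℓ` iff `(ℓ, i) ∈ S_C`; `u_j → y_ℓ` iff `(ℓ, j) ∈ S_D`. -/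
def GpEdge {m k t : ℕ} (SA : Set (Fin m × Fin m)) (SB : Set (Fin m × Fin k))
    (SC : Set (Fin t × Fin m)) (SD : Set (Fin t × Fin k)) :
    GpVert m k t → GpVert m k t → Prop
  | Sum.inl m₂, Sum.inl m₁ => (m₁, m₂) ∈ SA
  | Sum.inr (Sum.inl j), Sum.inl i => (i, j) ∈ SB
  | Sum.inl i, Sum.inr (Sum.inr l) => (l, i) ∈ SC
  | Sum.inr (Sum.inl j), Sum.inr (Sum.inr l) => (l, j) ∈ SD
  | _, _ => False

/-- A `U`–`Y` path in a directed graph with edge relation `E`: a finite sequence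
of pairwise distinct vertices whose consecutive pairs are edges, starting at an
input vertex (in `U`) and ending at an output vertex (in `Y`). -/
def IsUYPath {m k t : ℕ} (E : GpVert m k t → GpVert m k t → Prop)
    (l : List (GpVert m k t)) : Prop :=
  l.Nodup ∧ l.Chain' E ∧
    (∃ u : Fin k, l.head? = some (Sum.inr (Sum.inl u))) ∧
    (∃ y : Fin t, l.getLast? = some (Sum.inr (Sum.inr y)))

/-- `p` is the maximal cardinality of a vertex-disjoint family of `U`–`Y` paths. -/
def IsMaxDisjointUY {m k t : ℕ} (E : GpVert m k t → GpVert m k t → Prop) (p : ℕ) : Prop :=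
  IsGreatest {c : ℕ | ∃ P : Fin c → List (GpVert m k t),
    (∀ i, IsUYPath E (P i)) ∧
    (∀ i j, i ≠ j → ∀ v ∈ P i, v ∉ P j)} p


section auxUY
open Matrix Module Submodule

lemma exists_inj_li {ι : Type*} [Fintype ι] {V : Type*} [AddCommGroup V] [Module ℝ V]
    (v : ι → V) (r : ℕ) (hr : finrank ℝ (span ℝ (Set.range v)) = r) :
    ∃ g : Fin r → ι, Function.Injective g ∧ LinearIndependent ℝ (v ∘ g) := by
  classical
  subst hr
  obtain ⟨b, hbsub, hbspan, hbind⟩ := exists_linearIndependent ℝ (Set.range v)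
  have hbfin : b.Finite := (Set.finite_range v).subset hbsub
  haveI := hbfin.fintype
  have hcard : Fintype.card b = finrank ℝ (span ℝ (Set.range v)) := by
    rw [← hbspan, finrank_span_set_eq_card hbind, Set.toFinset_card]
  obtain ⟨eqv⟩ : Nonempty (Fin (finrank ℝ (span ℝ (Set.range v))) ≃ b) :=
    ⟨(Fintype.equivFinOfCardEq hcard).symm⟩
  have hpre : ∀ i, ∃ j : ι, v j = (eqv i : V) := fun i => hbsub (eqv i).2
  choose g hg using hpre
  have hvg : v ∘ g = (fun x : b => (x : V)) ∘ eqv := funext fun i => hg i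
  refine ⟨g, ?_, ?_⟩
  · intro i i' h
    have : (eqv i : V) = (eqv i' : V) := by rw [← hg i, ← hg i', h]
    exact eqv.injective (Subtype.ext this)
  · rw [hvg]
    exact hbind.comp eqv eqv.injective

lemma exists_invertible_submatrix {t k : ℕ} (M : Matrix (Fin t) (Fin k) ℝ) :
    ∃ (e : Fin M.rank → Fin t) (f : Fin M.rank → Fin k),
      Function.Injective e ∧ Function.Injective f ∧ IsUnit (M.submatrix e f) := by
  classical
  obtain ⟨f, hf, hfi⟩ := exists_inj_li Mᵀ M.rank (rank_eq_finrank_span_cols M).symm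
  -- M₁ := M.submatrix id f has independent columns, hence rank M.rank
  set M₁ : Matrix (Fin t) (Fin M.rank) ℝ := M.submatrix id f with hM₁
  have hM₁t : M₁ᵀ = Mᵀ ∘ f := by ext i j; rfl
  have hrank1 : M₁.rank = M.rank := by
    rw [← rank_transpose, hM₁t]
    simpa using LinearIndependent.rank_matrix (M := Mᵀ ∘ f) hfi
  obtain ⟨e, he, hei⟩ := exists_inj_li M₁ M.rank
    (by have := rank_eq_finrank_span_row M₁; rw [hrank1] at this; exact this.symm)
  refine ⟨e, f, he, hf, ?_⟩
  have : M.submatrix e f = Matrix.of (M₁ ∘ e) := by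
    ext i j; rfl
  rw [this]
  exact linearIndependent_rows_iff_isUnit.mp hei

/-- column-vertex embedding -/
def colV {m k t r : ℕ} (f : Fin r → Fin k) : Fin m ⊕ Fin r → GpVert m k t :=
  Sum.elim Sum.inl (fun s => Sum.inr (Sum.inl (f s)))

/-- row-vertex embedding -/
def rowV {m k t r : ℕ} (e : Fin r → Fin t) : Fin m ⊕ Fin r → GpVert m k t :=
  Sum.elim Sum.inl (fun s => Sum.inr (Sum.inr (e s)))

lemma exists_disjoint_paths {m k t r : ℕ} (E : GpVert m k t → GpVert m k t → Prop)
    (e : Fin r → Fin t) (he : Function.Injective e)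
    (f : Fin r → Fin k) (hf : Function.Injective f)
    (σ : Equiv.Perm (Fin m ⊕ Fin r))
    (hE : ∀ c, E (colV f c) (rowV e (σ c))) :
    ∃ P : Fin r → List (GpVert m k t),
      (∀ i, IsUYPath E (P i)) ∧ (∀ i j, i ≠ j → ∀ v ∈ P i, v ∉ P j) := by
  classical
  have hex : ∀ s : Fin r, ∃ nn : ℕ, 0 < nn ∧ ((σ ^ nn) (Sum.inr s)).isRight := by
    intro s
    refine ⟨orderOf σ, orderOf_pos σ, ?_⟩
    rw [pow_orderOf_eq_one σ]
    simp
  set n : Fin r → ℕ := fun s => Nat.find (hex s) with hn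
  have hn0 : ∀ s, 0 < n s := fun s => (Nat.find_spec (hex s)).1
  have hnR : ∀ s, ((σ ^ n s) (Sum.inr s)).isRight := fun s => (Nat.find_spec (hex s)).2
  have hmin : ∀ s j, 0 < j → j < n s → ((σ ^ j) (Sum.inr s)).isLeft := by
    intro s j hj hjn
    have := Nat.find_min (hex s) hjn
    simp only [not_and] at this
    have h2 := this hj
    cases h : (σ ^ j) (Sum.inr s) with
    | inl => simp
    | inr => rw [h] at h2; simp at h2
  -- the vertex at step j on path s
  set vert : Fin r → ℕ → GpVert m k t := fun s j =>
    if j < n s then colV f ((σ ^ j) (Sum.inr s)) else rowV e ((σ ^ n s) (Sum.inr s)) with hvert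
  -- core cancellation
  have core : ∀ s s' j j', j ≤ n s → j' ≤ n s' → j ≤ j' →
      (σ ^ j) (Sum.inr s) = (σ ^ j') (Sum.inr s') →
      (j' - j = 0 ∨ (j = 0 ∧ j' = n s')) := by
    intro s s' j j' hj hj' hle hEq
    have hsplit : (σ ^ j') (Sum.inr s') = (σ ^ j) ((σ ^ (j' - j)) (Sum.inr s')) := by
      rw [← Equiv.Perm.mul_apply, ← pow_add]
      congr 2
      omega
    rw [hsplit] at hEq
    have hcancel : (Sum.inr s : Fin m ⊕ Fin r) = (σ ^ (j' - j)) (Sum.inr s') :=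
      (σ ^ j).injective hEq
    rcases Nat.eq_zero_or_pos (j' - j) with h0 | hpos
    · exact Or.inl h0
    · right
      have hR : ((σ ^ (j' - j)) (Sum.inr s')).isRight := by rw [← hcancel]; simp
      have : ¬ (j' - j < n s') := by
        intro hlt
        have := hmin s' (j' - j) hpos hlt
        rw [Sum.isLeft_iff] at this
        obtain ⟨x, hx⟩ := this
        rw [hx] at hR; simp at hR
      have hd : j' - j = n s' := le_antisymm (by omega) (by omega)
      constructor
      · omega
      · omega
  -- full injectivity of vert on the allowed ranges
  have inj : ∀ s s' j j', j ≤ n s → j' ≤ n s' → vert s j = vert s' j' → s = s' ∧ j = j' := by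
    intro s s' j j' hj hj' hEq
    by_cases h1 : j < n s <;> by_cases h2 : j' < n s'
    · -- both col
      simp only [hvert, if_pos h1, if_pos h2] at hEq
      have hcc : (σ ^ j) (Sum.inr s) = (σ ^ j') (Sum.inr s') := by
        have hcolinj : Function.Injective (colV (m := m) (t := t) f) := by
          intro a b hab
          cases a <;> cases b <;> simp [colV] at hab <;> simp_all
          exact hf hab
        exact hcolinj hEq
      rcases le_total j j' with hle | hle
      · rcases core s s' j j' hj hj' hle hcc with h0 | ⟨hz, hnn⟩
        · have : j = j' := by omega
          subst this
          have : (Sum.inr s : Fin m ⊕ Fin r) = Sum.inr s' := (σ ^ j).injective hcc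
          simp at this
          exact ⟨this, rfl⟩
        · omega
      · rcases core s' s j' j hj' hj hle hcc.symm with h0 | ⟨hz, hnn⟩
        · have : j = j' := by omega
          subst this
          have : (Sum.inr s : Fin m ⊕ Fin r) = Sum.inr s' := (σ ^ j).injective hcc
          simp at this
          exact ⟨this, rfl⟩
        · omega
    · -- col = row : impossible
      exfalso
      have hj'n : j' = n s' := by omega
      simp only [hvert, if_pos h1, if_neg (by omega : ¬ j' < n s')] at hEq
      obtain ⟨y, hy⟩ := Sum.isRight_iff.mp (hnR s')
      rw [hy] at hEq
      cases hc : (σ ^ j) (Sum.inr s) with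
      | inl x => rw [hc] at hEq; simp [colV, rowV] at hEq
      | inr x => rw [hc] at hEq; simp [colV, rowV] at hEq
    · exfalso
      have hjn : j = n s := by omega
      simp only [hvert, if_neg (by omega : ¬ j < n s), if_pos h2] at hEq
      obtain ⟨y, hy⟩ := Sum.isRight_iff.mp (hnR s)
      rw [hy] at hEq
      cases hc : (σ ^ j') (Sum.inr s') with
      | inl x => rw [hc] at hEq; simp [colV, rowV] at hEq
      | inr x => rw [hc] at hEq; simp [colV, rowV] at hEq
    · -- both row
      have hjn : j = n s := by omega
      have hj'n : j' = n s' := by omega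
      simp only [hvert, if_neg (by omega : ¬ j < n s), if_neg (by omega : ¬ j' < n s')] at hEq
      have hrr : (σ ^ n s) (Sum.inr s) = (σ ^ n s') (Sum.inr s') := by
        have hrowinj : Function.Injective (rowV (m := m) (k := k) e) := by
          intro a b hab
          cases a <;> cases b <;> simp [rowV] at hab <;> simp_all
          exact he hab
        exact hrowinj hEq
      have hss : s = s' := by
        rcases le_total (n s) (n s') with hle | hle
        · rcases core s s' (n s) (n s') le_rfl le_rfl hle hrr with h0 | ⟨hz, _⟩
          · have : n s = n s' := by omega
            rw [this] at hrr
            have := (σ ^ n s').injective hrr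
            simpa using this
          · exact absurd hz (by have := hn0 s; omega)
        · rcases core s' s (n s') (n s) le_rfl le_rfl hle hrr.symm with h0 | ⟨hz, _⟩
          · have : n s = n s' := by omega
            rw [this] at hrr
            have := (σ ^ n s').injective hrr
            simpa using this
          · exact absurd hz (by have := hn0 s'; omega)
      subst hss
      exact ⟨rfl, by omega⟩
  refine ⟨fun s => (List.range (n s + 1)).map (vert s), ?_, ?_⟩
  · intro s
    refine ⟨?_, ?_, ?_, ?_⟩
    · refine (List.nodup_range : (List.range (n s + 1)).Nodup).map_on ?_
      intro j hj j' hj' hEq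
      rw [List.mem_range] at hj hj'
      exact (inj s s j j' (by omega) (by omega) hEq).2
    · show List.IsChain E ((List.range (n s + 1)).map (vert s))
      rw [List.isChain_map, List.isChain_range_succ]
      intro j hjn
      have hstep : rowV e ((σ ^ (j + 1)) (Sum.inr s)) = vert s (j + 1) := by
        by_cases h : j + 1 < n s
        · obtain ⟨x, hx⟩ := Sum.isLeft_iff.mp (hmin s (j + 1) (by omega) h)
          simp only [hvert, if_pos h, hx]
          rfl
        · have h2 : j + 1 = n s := by omega
          simp only [hvert, h2, if_neg (lt_irrefl (n s))]
      have := hE ((σ ^ j) (Sum.inr s))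
      rw [show σ ((σ ^ j) (Sum.inr s)) = (σ ^ (j + 1)) (Sum.inr s) by
        rw [pow_succ', Equiv.Perm.mul_apply]] at this
      rw [hstep] at this
      simpa only [hvert, if_pos hjn] using this
    · refine ⟨f s, ?_⟩
      show (List.map (vert s) (List.range (n s + 1))).head? = _
      rw [List.range_succ_eq_map, List.map_cons, List.head?_cons]
      simp only [hvert, if_pos (hn0 s), pow_zero]
      rfl
    · obtain ⟨y, hy⟩ := Sum.isRight_iff.mp (hnR s)
      refine ⟨e y, ?_⟩
      show (List.map (vert s) (List.range (n s + 1))).getLast? = _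
      rw [List.getLast?_eq_getElem?]
      simp only [List.length_map, List.length_range, Nat.add_sub_cancel, List.getElem?_map,
        List.getElem?_range (Nat.lt_succ_self (n s)), Option.map_some]
      simp only [hvert, lt_irrefl, if_neg (lt_irrefl (n s)), hy]
      rfl
  · intro s s' hss v hv hv'
    rw [List.mem_map] at hv hv'
    obtain ⟨j, hj, hvj⟩ := hv
    obtain ⟨j', hj', hvj'⟩ := hv'
    rw [List.mem_range] at hj hj'
    exact hss (inj s s' j j' (by omega) (by omega) (hvj.trans hvj'.symm)).1

end auxUY

/-- **Upper-bound half of Lemma 2** (van der Woude).  For all real matrices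
`A, B, C, D` conforming to the patterns `S_A, S_B, S_C, S_D` with `A`
invertible, the rank of the Schur complement `D - C * A⁻¹ * B` is at most the
maximal cardinality `p` of a vertex-disjoint family of `U`–`Y` paths in `G_p`. -/
theorem stmt3 {m k t : ℕ} (hm : 0 < m) (hk : 0 < k) (ht : 0 < t) (hkt : k ≤ t)
    (SA : Set (Fin m × Fin m)) (SB : Set (Fin m × Fin k))
    (SC : Set (Fin t × Fin m)) (SD : Set (Fin t × Fin k))
    (p : ℕ) (hp : IsMaxDisjointUY (GpEdge SA SB SC SD) p)
    (A : Matrix (Fin m) (Fin m) ℝ) (B : Matrix (Fin m) (Fin k) ℝ)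
    (C : Matrix (Fin t) (Fin m) ℝ) (D : Matrix (Fin t) (Fin k) ℝ)
    (hA : ConformsTo A SA) (hB : ConformsTo B SB)
    (hC : ConformsTo C SC) (hD : ConformsTo D SD)
    (hAinv : IsUnit A) :
    (D - C * A⁻¹ * B).rank ≤ p := by
  classical
  set M := D - C * A⁻¹ * B with hM
  obtain ⟨e, f, he, hf, hunit⟩ := exists_invertible_submatrix M
  haveI : Invertible A := hAinv.invertible
  have hsub : M.submatrix e f =
      D.submatrix e f - C.submatrix e id * A⁻¹ * B.submatrix id f := by
    show (D - C * A⁻¹ * B).submatrix e f = _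
    rw [show (D - C * A⁻¹ * B).submatrix e f
        = D.submatrix e f - (C * A⁻¹ * B).submatrix e f from
      congrFun (congrFun (Matrix.submatrix_sub D (C * A⁻¹ * B)) e) f]
    rw [Matrix.submatrix_mul (C * A⁻¹) B e id f Function.bijective_id,
      Matrix.submatrix_mul C A⁻¹ e id id Function.bijective_id,
      Matrix.submatrix_id_id]
  have hdet1 : (M.submatrix e f).det ≠ 0 :=
    isUnit_iff_ne_zero.mp ((Matrix.isUnit_iff_isUnit_det _).mp hunit)
  have hdetA : A.det ≠ 0 := isUnit_iff_ne_zero.mp ((Matrix.isUnit_iff_isUnit_det _).mp hAinv)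
  set N := Matrix.fromBlocks A (B.submatrix id f) (C.submatrix e id) (D.submatrix e f) with hN
  have hdetN : N.det ≠ 0 := by
    rw [hN, Matrix.det_fromBlocks₁₁, Matrix.invOf_eq_nonsing_inv]
    exact mul_ne_zero hdetA (by rw [← hsub]; exact hdet1)
  have hperm : ∃ σ : Equiv.Perm (Fin m ⊕ Fin M.rank), ∀ c, N (σ c) c ≠ 0 := by
    by_contra h
    push_neg at h
    apply hdetN
    rw [Matrix.det_apply]
    refine Finset.sum_eq_zero fun σ _ => ?_
    obtain ⟨c, hc⟩ := h σ
    have hz : (∏ i : Fin m ⊕ Fin M.rank, N (σ i) i) = 0 :=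
      Finset.prod_eq_zero (Finset.mem_univ c) hc
    rw [hz, smul_zero]
  obtain ⟨σ, hσ⟩ := hperm
  have hE : ∀ c, GpEdge SA SB SC SD (colV f c) (rowV e (σ c)) := by
    intro c
    have h := hσ c
    rcases hc : σ c with i | s <;> rcases c with i' | s' <;> rw [hc] at h
    · exact hA _ _ (by simpa [hN] using h)
    · exact hB _ _ (by simpa [hN] using h)
    · exact hC _ _ (by simpa [hN] using h)
    · exact hD _ _ (by simpa [hN] using h)
  obtain ⟨P, hP1, hP2⟩ := exists_disjoint_paths (GpEdge SA SB SC SD) e he f hf σ hE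
  exact hp.2 ⟨P, hP1, hP2⟩
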